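/- Generalized Budan's rule: let f : [a, b] → ℝ be a function that is n times differentiable on [a, b] (one-sidedly at the endpoints), such that the n-th derivative f⁽ⁿ⁾ never vanishes and has constant sign on [a, b], and such that f(a) ≠ 0. Then the number of zeros of f in [a, b], counted with multiplicity, is at most v(f, a, n) − v(f, b, n). -/

import Mathlib

/-- Number of sign changes in a list of reals, after discarding zero entries:
the number of consecutive pairs with negative product. -/
noncomputable def signChanges (l : List ℝ) : ℕ :=
  let l' := l.filter (fun x => decide (x ≠ 0))
  (l'.zip l'.tail).countP (fun p => decide (p.1 * p.2 < 0))

/-- `v(f, t, n)`: number of sign changes in the sequence `(f(t), f'(t), …, f⁽ⁿ⁾(t))`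
after deleting its zero entries, where the derivatives are taken within the set `s`
(one-sidedly at its endpoints). -/
noncomputable def vF (n : ℕ) (f : ℝ → ℝ) (s : Set ℝ) (t : ℝ) : ℕ :=
  signChanges (List.ofFn fun i : Fin (n + 1) => iteratedDerivWithin (i : ℕ) f s t)

open Set Topology Filter

noncomputable def fnz (l : List ℝ) : ℝ := (l.filter (fun x => decide (x ≠ 0))).headI

lemma sign_trans {a b c : ℝ} (h1 : 0 < a * b) (h2 : 0 < b * c) : 0 < a * c := by
  nlinarith [mul_pos h1 h2, sq_nonneg b]

lemma sign_neg_trans {a b x y : ℝ} (h1 : 0 < a * x) (h2 : 0 < b * y) (h3 : x * y < 0) :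
    a * b < 0 := by
  nlinarith [mul_pos h1 h2]

lemma sign_pos_trans {a b x y : ℝ} (h1 : 0 < a * x) (h2 : 0 < b * y) (h3 : 0 < x * y) :
    0 < a * b := by
  nlinarith [mul_pos h1 h2, mul_pos h3 (mul_pos h1 h2)]

lemma signChanges_cons_zero (S : List ℝ) : signChanges ((0:ℝ) :: S) = signChanges S := by
  unfold signChanges
  rw [List.filter_cons, if_neg (by simp)]

lemma signChanges_cons_of_filter_eq {x y : ℝ} {S : List ℝ} {R : List ℝ} (hx : x ≠ 0)
    (h : S.filter (fun z => decide (z ≠ 0)) = y :: R) :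
    signChanges (x :: S) = (if x * y < 0 then 1 else 0) + signChanges S := by
  unfold signChanges
  rw [List.filter_cons, if_pos (by simp [hx]), h]
  show List.countP _ ((x, y) :: (y :: R).zip R) = _
  rw [List.countP_cons]
  simp only [decide_eq_true_eq, List.tail_cons]
  omega

lemma signChanges_singleton (x : ℝ) : signChanges [x] = 0 := by
  by_cases hx : x = 0 <;> simp [signChanges, List.filter_cons, hx]

lemma fnz_cons_zero (S : List ℝ) : fnz ((0:ℝ) :: S) = fnz S := by
  unfold fnz; rw [List.filter_cons, if_neg (by simp)]

lemma fnz_cons_nz {x : ℝ} (S : List ℝ) (hx : x ≠ 0) : fnz (x :: S) = x := by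
  unfold fnz; rw [List.filter_cons, if_pos (by simp [hx])]; rfl

lemma filter_ofFn_ne_nil {n : ℕ} (σ : Fin (n+1) → ℝ) (h : σ (Fin.last n) ≠ 0) :
    (List.ofFn σ).filter (fun z => decide (z ≠ 0)) ≠ [] := by
  intro hc
  rw [List.filter_eq_nil_iff] at hc
  exact absurd (hc (σ (Fin.last n))
    (by rw [List.mem_ofFn]; exact ⟨_, rfl⟩)) (by simp [h])

lemma filter_ofFn_all_nz {n : ℕ} (p : Fin n → ℝ) (h : ∀ i, p i ≠ 0) :
    (List.ofFn p).filter (fun z => decide (z ≠ 0)) = List.ofFn p := by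
  rw [List.filter_eq_self]
  intro a ha
  rw [List.mem_ofFn] at ha
  obtain ⟨i, rfl⟩ := ha
  simp [h i]

lemma right_aux : ∀ (n : ℕ) (σ p : Fin (n+1) → ℝ),
    σ (Fin.last n) ≠ 0 →
    (∀ i, σ i ≠ 0 → 0 < p i * σ i) →
    (∀ i : Fin n, σ i.castSucc = 0 → 0 < p i.castSucc * p i.succ) →
    signChanges (List.ofFn p) ≤ signChanges (List.ofFn σ) ∧
      0 < p 0 * fnz (List.ofFn σ) := by
  intro n
  induction n with
  | zero =>
    intro σ p hlast h1 h2
    have h0 : σ 0 ≠ 0 := hlast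
    refine ⟨?_, ?_⟩
    · show signChanges [p 0] ≤ signChanges [σ 0]
      simp [signChanges_singleton]
    · show 0 < p 0 * fnz [σ 0]
      rw [fnz_cons_nz _ h0]
      exact h1 0 h0
  | succ n IH =>
    intro σ p hlast h1 h2
    set σ' : Fin (n+1) → ℝ := fun i => σ i.succ with hσ'
    set p' : Fin (n+1) → ℝ := fun i => p i.succ with hp'
    have hlast' : σ' (Fin.last n) ≠ 0 := by
      show σ (Fin.last n).succ ≠ 0; rw [Fin.succ_last]; exact hlast
    have h1' : ∀ i, σ' i ≠ 0 → 0 < p' i * σ' i := fun i h => h1 i.succ h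
    have h2' : ∀ i : Fin n, σ' i.castSucc = 0 → 0 < p' i.castSucc * p' i.succ := by
      intro i h
      have h' : σ i.succ.castSucc = 0 := by
        rw [← Fin.succ_castSucc]; exact h
      have := h2 i.succ h'
      show 0 < p i.castSucc.succ * p i.succ.succ
      rw [Fin.succ_castSucc]; exact this
    obtain ⟨IH1, IH2⟩ := IH σ' p' hlast' h1' h2'
    have hp : ∀ i, p i ≠ 0 := by
      intro i
      by_cases hσ : σ i = 0
      · have hil : i ≠ Fin.last (n+1) := by rintro rfl; exact hlast hσ
        obtain ⟨j, rfl⟩ := Fin.exists_castSucc_eq.mpr hil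
        have := h2 j hσ
        intro h0; rw [h0] at this; simp at this
      · have := h1 i hσ
        intro h0; rw [h0] at this; simp at this
    have hofp : List.ofFn p = p 0 :: List.ofFn p' := List.ofFn_succ (f := p)
    have hofσ : List.ofFn σ = σ 0 :: List.ofFn σ' := List.ofFn_succ (f := σ)
    have hfiltp' : (List.ofFn p').filter (fun z => decide (z ≠ 0)) = p 1 :: List.ofFn (fun i : Fin n => p' i.succ) := by
      rw [filter_ofFn_all_nz p' (fun i => hp i.succ), List.ofFn_succ (f := p')]
      show (p (0:Fin (n+1)).succ :: _) = _
      rw [Fin.succ_zero_eq_one]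
    have scp : signChanges (List.ofFn p)
        = (if p 0 * p 1 < 0 then 1 else 0) + signChanges (List.ofFn p') := by
      rw [hofp, signChanges_cons_of_filter_eq (hp 0) hfiltp']
    by_cases hσ0 : σ 0 = 0
    · have hp01 : 0 < p 0 * p 1 := by
        have := h2 0 (by rw [Fin.castSucc_zero]; exact hσ0)
        rw [Fin.castSucc_zero, Fin.succ_zero_eq_one] at this
        exact this
      have scσ : signChanges (List.ofFn σ) = signChanges (List.ofFn σ') := by
        rw [hofσ, hσ0, signChanges_cons_zero]
      have fσ : fnz (List.ofFn σ) = fnz (List.ofFn σ') := by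
        rw [hofσ, hσ0, fnz_cons_zero]
      constructor
      · rw [scp, scσ, if_neg (by exact not_lt.mpr hp01.le)]
        simpa using IH1
      · rw [fσ]
        have : p' 0 = p 1 := by show p (0:Fin (n+1)).succ = p 1; rw [Fin.succ_zero_eq_one]
        rw [this] at IH2
        exact sign_trans hp01 IH2
    · obtain ⟨y, R, hyR⟩ := List.exists_cons_of_ne_nil (filter_ofFn_ne_nil σ' hlast')
      have hy : y = fnz (List.ofFn σ') := by rw [fnz, hyR]; rfl
      have scσ : signChanges (List.ofFn σ)
          = (if σ 0 * y < 0 then 1 else 0) + signChanges (List.ofFn σ') := by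
        rw [hofσ, signChanges_cons_of_filter_eq hσ0 hyR]
      have hp0σ := h1 0 hσ0
      have hp1y : 0 < p 1 * y := by
        rw [hy]
        have : p' 0 = p 1 := by show p (0:Fin (n+1)).succ = p 1; rw [Fin.succ_zero_eq_one]
        rw [← this]; exact IH2
      constructor
      · rw [scp, scσ]
        have hif : (if p 0 * p 1 < 0 then 1 else 0) ≤ (if σ 0 * y < 0 then 1 else 0) := by
          by_cases hc : p 0 * p 1 < 0
          · rw [if_pos hc, if_pos ?_]
            exact sign_neg_trans (by linarith [hp0σ] : (0:ℝ) < σ 0 * p 0)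
              (by linarith [hp1y] : (0:ℝ) < y * p 1) hc
          · simp [hc]
        omega
      · rw [hofσ, fnz_cons_nz _ hσ0]
        exact hp0σ

lemma left_aux : ∀ (n : ℕ) (σ q : Fin (n+1) → ℝ) (μ : ℕ),
    σ (Fin.last n) ≠ 0 →
    (∀ i, σ i ≠ 0 → 0 < q i * σ i) →
    (∀ i : Fin n, σ i.castSucc = 0 → q i.castSucc * q i.succ < 0) →
    (∀ i : Fin (n+1), (i : ℕ) < μ → σ i = 0) →
    signChanges (List.ofFn σ) + μ ≤ signChanges (List.ofFn q) := by
  intro n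
  induction n with
  | zero =>
    intro σ q μ hlast h1 h2 hμ
    have hμ0 : μ = 0 := by
      by_contra h
      exact hlast (hμ 0 (by simp only [Fin.val_zero]; omega))
    show signChanges [σ 0] + μ ≤ signChanges [q 0]
    simp [signChanges_singleton, hμ0]
  | succ n IH =>
    intro σ q μ hlast h1 h2 hμ
    set σ' : Fin (n+1) → ℝ := fun i => σ i.succ with hσ'
    set q' : Fin (n+1) → ℝ := fun i => q i.succ with hq'
    have hlast' : σ' (Fin.last n) ≠ 0 := by
      show σ (Fin.last n).succ ≠ 0; rw [Fin.succ_last]; exact hlast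
    have h1' : ∀ i, σ' i ≠ 0 → 0 < q' i * σ' i := fun i h => h1 i.succ h
    have h2' : ∀ i : Fin n, σ' i.castSucc = 0 → q' i.castSucc * q' i.succ < 0 := by
      intro i h
      have h' : σ i.succ.castSucc = 0 := by rw [← Fin.succ_castSucc]; exact h
      have := h2 i.succ h'
      show q i.castSucc.succ * q i.succ.succ < 0
      rw [Fin.succ_castSucc]; exact this
    have hq : ∀ i, q i ≠ 0 := by
      intro i
      by_cases hσ : σ i = 0
      · have hil : i ≠ Fin.last (n+1) := by rintro rfl; exact hlast hσ
        obtain ⟨j, rfl⟩ := Fin.exists_castSucc_eq.mpr hil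
        have := h2 j hσ
        intro h0; rw [h0] at this; simp at this
      · have := h1 i hσ
        intro h0; rw [h0] at this; simp at this
    have hofq : List.ofFn q = q 0 :: List.ofFn q' := List.ofFn_succ (f := q)
    have hofσ : List.ofFn σ = σ 0 :: List.ofFn σ' := List.ofFn_succ (f := σ)
    have hq10 : q' 0 = q 1 := by show q (0:Fin (n+1)).succ = q 1; rw [Fin.succ_zero_eq_one]
    have hfiltq' : (List.ofFn q').filter (fun z => decide (z ≠ 0))
        = q 1 :: List.ofFn (fun i : Fin n => q' i.succ) := by
      rw [filter_ofFn_all_nz q' (fun i => hq i.succ), List.ofFn_succ (f := q'), hq10]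
    have scq : signChanges (List.ofFn q)
        = (if q 0 * q 1 < 0 then 1 else 0) + signChanges (List.ofFn q') := by
      rw [hofq, signChanges_cons_of_filter_eq (hq 0) hfiltq']
    by_cases hσ0 : σ 0 = 0
    · have hq01 : q 0 * q 1 < 0 := by
        have := h2 0 (by rw [Fin.castSucc_zero]; exact hσ0)
        rw [Fin.castSucc_zero, Fin.succ_zero_eq_one] at this
        exact this
      have scσ : signChanges (List.ofFn σ) = signChanges (List.ofFn σ') := by
        rw [hofσ, hσ0, signChanges_cons_zero]
      have hμ' : ∀ i : Fin (n+1), (i : ℕ) < μ - 1 → σ' i = 0 := by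
        intro i hi
        exact hμ i.succ (by rw [Fin.val_succ]; omega)
      have key := IH σ' q' (μ - 1) hlast' h1' h2' hμ'
      rw [scσ, scq, if_pos hq01]
      clear_value σ' q'
      have hμle : μ ≤ (μ - 1) + 1 := by omega
      calc signChanges (List.ofFn σ') + μ ≤ (signChanges (List.ofFn σ') + (μ - 1)) + 1 := by
            rw [add_assoc]; exact Nat.add_le_add_left hμle _
        _ ≤ signChanges (List.ofFn q') + 1 := Nat.add_le_add_right key 1
        _ = 1 + signChanges (List.ofFn q') := Nat.add_comm _ _
    · have hμ0 : μ = 0 := by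
        by_contra h
        exact hσ0 (hμ 0 (by simp only [Fin.val_zero]; omega))
      obtain ⟨y, R, hyR⟩ := List.exists_cons_of_ne_nil (filter_ofFn_ne_nil σ' hlast')
      have scσ : signChanges (List.ofFn σ)
          = (if σ 0 * y < 0 then 1 else 0) + signChanges (List.ofFn σ') := by
        rw [hofσ, signChanges_cons_of_filter_eq hσ0 hyR]
      have hq0σ := h1 0 hσ0
      by_cases hσ1 : σ 1 = 0
      · have hμ1 : ∀ i : Fin (n+1), (i : ℕ) < 1 → σ' i = 0 := by
          intro i hi
          have : i = 0 := by
            apply Fin.ext; simpa using hi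
          rw [this]
          show σ (0:Fin (n+1)).succ = 0
          rw [Fin.succ_zero_eq_one]; exact hσ1
        have hIH := IH σ' q' 1 hlast' h1' h2' hμ1
        rw [scσ, scq, hμ0]
        clear_value σ' q' 
        have : (if σ 0 * y < 0 then 1 else 0) ≤ 1 := by split <;> omega
        omega
      · have hIH := IH σ' q' 0 hlast' h1' h2' (by intro i hi; omega)
        have hy : y = σ 1 := by
          have hσ10 : σ' 0 = σ 1 := by
            show σ (0:Fin (n+1)).succ = σ 1; rw [Fin.succ_zero_eq_one]
          have : (List.ofFn σ').filter (fun z => decide (z ≠ 0))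
              = σ 1 :: ((List.ofFn (fun i : Fin n => σ' i.succ)).filter (fun z => decide (z ≠ 0))) := by
            rw [List.ofFn_succ (f := σ'), hσ10, List.filter_cons, if_pos (by simp [hσ1])]
          rw [this] at hyR
          exact (List.cons.injEq _ _ _ _ ▸ hyR).1.symm
        have hq1σ := h1 1 hσ1
        subst hy
        have hiff : (σ 0 * σ 1 < 0) ↔ (q 0 * q 1 < 0) := by
          constructor
          · intro h
            exact sign_neg_trans hq0σ hq1σ h
          · intro h
            exact sign_neg_trans (by nlinarith [hq0σ] : (0:ℝ) < σ 0 * q 0)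
              (by nlinarith [hq1σ] : (0:ℝ) < σ 1 * q 1) h
        rw [scσ, scq, hμ0]
        clear_value σ' q'
        by_cases hc : σ 0 * σ 1 < 0
        · rw [if_pos hc, if_pos (hiff.mp hc)]
          omega
        · rw [if_neg hc, if_neg (fun hh => hc (hiff.mpr hh))]
          omega


lemma signs_left {f : ℝ → ℝ} {a b : ℝ} {n : ℕ} (hab : a < b)
    (hdiff : ∀ i < n, ∀ x ∈ Set.Icc a b,
      DifferentiableWithinAt ℝ (iteratedDerivWithin i f (Set.Icc a b)) (Set.Icc a b) x)
    (hsign : (∀ x ∈ Set.Icc a b, 0 < iteratedDerivWithin n f (Set.Icc a b) x) ∨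
             (∀ x ∈ Set.Icc a b, iteratedDerivWithin n f (Set.Icc a b) x < 0))
    (t0 : ℝ) (ht0 : t0 ∈ Set.Icc a b) :
    ∃ δ > 0, ∀ t ∈ Set.Icc a b, t0 - δ < t → t < t0 →
      ∀ i j : ℕ, i ≤ n → i ≤ j → j ≤ n →
      iteratedDerivWithin j f (Set.Icc a b) t0 ≠ 0 →
      (∀ k, i ≤ k → k < j → iteratedDerivWithin k f (Set.Icc a b) t0 = 0) →
      0 < iteratedDerivWithin i f (Set.Icc a b) t *
        ((-1)^(j-i) * iteratedDerivWithin j f (Set.Icc a b) t0) := by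
  set s := Set.Icc a b with hs
  set g : ℕ → ℝ → ℝ := fun i => iteratedDerivWithin i f s with hg
  have main : ∀ d : ℕ, ∃ δ > 0, ∀ t ∈ s, t0 - δ < t → t < t0 →
      ∀ i j : ℕ, n - d ≤ i → i ≤ n → i ≤ j → j ≤ n → g j t0 ≠ 0 →
      (∀ k, i ≤ k → k < j → g k t0 = 0) →
      0 < g i t * ((-1)^(j-i) * g j t0) := by
    intro d
    induction d with
    | zero =>
      refine ⟨1, one_pos, ?_⟩
      intro t ht h1 h2 i j hge hle hij hjn hj hmin
      have hi : i = n := by omega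
      have hjeq : j = n := by omega
      subst hi; subst hjeq
      rw [Nat.sub_self, pow_zero, one_mul]
      rcases hsign with hp | hn
      · exact mul_pos (hp t ht) (hp t0 ht0)
      · exact mul_pos_of_neg_of_neg (hn t ht) (hn t0 ht0)
    | succ d IH =>
      obtain ⟨δ₀, hδ₀, hIH⟩ := IH
      by_cases heq : n - (d+1) = n - d
      · refine ⟨δ₀, hδ₀, ?_⟩
        intro t ht h1 h2 i j hge hle hij hjn hj hmin
        exact hIH t ht h1 h2 i j (by omega) hle hij hjn hj hmin
      · set i0 := n - (d+1) with hi0def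
        have hi0lt : i0 < n - d := by omega
        have hi0n : i0 < n := by omega
        by_cases hz : g i0 t0 = 0
        · refine ⟨δ₀, hδ₀, ?_⟩
          intro t ht h1 h2 i j hge hle hij hjn hj hmin
          by_cases hi : n - d ≤ i
          · exact hIH t ht h1 h2 i j hi hle hij hjn hj hmin
          · have hii0 : i = i0 := by omega
            have hzi : g i t0 = 0 := by rw [hii0]; exact hz
            have hin' : i < n := by omega
            have hjgt : i < j := by
              rcases lt_or_eq_of_le hij with h | h
              · exact h
              · exact absurd (h ▸ hzi) hj
            -- monotonicity argument
            have hsub : Set.Icc t t0 ⊆ s := Set.Icc_subset_Icc ht.1 ht0.2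
            have hder_sign : ∀ u, t < u → u < t0 →
                0 < g (i+1) u * ((-1)^(j-(i+1)) * g j t0) := by
              intro u hu1 hu2
              have hu : u ∈ s := ⟨le_trans ht.1 hu1.le, le_trans hu2.le ht0.2⟩
              exact hIH u hu (by linarith) hu2 (i+1) j (by omega) (by omega)
                (by omega) hjn hj (fun k hk1 hk2 => hmin k (by omega) hk2)
            have hcont : ContinuousOn (g i) (Set.Icc t t0) :=
              fun x hx => ((hdiff i hin' x (hsub hx)).continuousWithinAt).mono hsub
            have hderiv : ∀ u ∈ Set.Ioo t t0, deriv (g i) u = g (i+1) u := by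
              intro u hu
              have husm : u ∈ s := hsub (Set.Ioo_subset_Icc_self hu)
              have hnb : s ∈ 𝓝 u :=
                Icc_mem_nhds (lt_of_le_of_lt ht.1 hu.1) (lt_of_lt_of_le hu.2 ht0.2)
              have : g (i+1) u = derivWithin (g i) s u :=
                congrFun iteratedDerivWithin_succ u
              rw [this, derivWithin_of_mem_nhds hnb]
            have hpow : ((-1:ℝ))^(j-i) = -((-1:ℝ))^(j-(i+1)) := by
              have hji : j - i = (j - (i+1)) + 1 := by omega
              rw [hji, pow_succ]; ring
            set c : ℝ := (-1)^(j-(i+1)) * g j t0 with hc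
            have hcne : c ≠ 0 := by
              apply mul_ne_zero _ hj
              positivity
            rw [hpow]
            have hgoal : 0 < g i t * (-c) → 0 < g i t * (-(-1:ℝ)^(j-(i+1)) * g j t0) := by
              intro h; rw [hc] at h; ring_nf at h ⊢; linarith [h]
            apply hgoal
            have htmem : t ∈ Set.Icc t t0 := ⟨le_refl t, h2.le⟩
            have ht0mem : t0 ∈ Set.Icc t t0 := ⟨h2.le, le_refl t0⟩
            rcases hcne.lt_or_gt with hneg | hpos
            · -- c < 0 : antitone, g i t > 0, -c > 0
              have hanti : StrictAntiOn (g i) (Set.Icc t t0) := by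
                apply strictAntiOn_of_deriv_neg (convex_Icc t t0) hcont
                intro u hu
                rw [interior_Icc] at hu
                rw [hderiv u hu]
                nlinarith [hder_sign u hu.1 hu.2]
              have := hanti htmem ht0mem h2
              rw [hzi] at this
              exact mul_pos this (by linarith)
            · -- c > 0 : monotone, g i t < 0, -c < 0
              have hmono : StrictMonoOn (g i) (Set.Icc t t0) := by
                apply strictMonoOn_of_deriv_pos (convex_Icc t t0) hcont
                intro u hu
                rw [interior_Icc] at hu
                rw [hderiv u hu]
                nlinarith [hder_sign u hu.1 hu.2]
              have := hmono htmem ht0mem h2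
              rw [hzi] at this
              exact mul_pos_of_neg_of_neg this (by linarith)
        · -- g i0 t0 ≠ 0 : continuity
          have hcw : ContinuousWithinAt (g i0) s t0 :=
            (hdiff i0 hi0n t0 ht0).continuousWithinAt
          have hprod : ContinuousWithinAt (fun x => g i0 x * g i0 t0) s t0 :=
            hcw.mul continuousWithinAt_const
          have hmem : {x : ℝ | 0 < g i0 x * g i0 t0} ∈ 𝓝[s] t0 := by
            have : Set.Ioi (0:ℝ) ∈ 𝓝 (g i0 t0 * g i0 t0) :=
              Ioi_mem_nhds (mul_self_pos.mpr hz)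
            exact hprod.preimage_mem_nhdsWithin this
          rw [Metric.mem_nhdsWithin_iff] at hmem
          obtain ⟨ε, hε, hball⟩ := hmem
          refine ⟨min δ₀ ε, lt_min hδ₀ hε, ?_⟩
          intro t ht h1 h2 i j hge hle hij hjn hj hmin
          by_cases hi : n - d ≤ i
          · exact hIH t ht (by have := min_le_left δ₀ ε; linarith) h2 i j hi hle hij hjn hj hmin
          · have hii0 : i = i0 := by omega
            have hzi : g i t0 ≠ 0 := by rw [hii0]; exact hz
            have hjeq : j = i := by
              by_contra hne
              exact hzi (hmin i le_rfl (by omega))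
            subst hjeq
            rw [Nat.sub_self, pow_zero, one_mul]
            have htb : t ∈ Metric.ball t0 ε ∩ s := by
              constructor
              · rw [Metric.mem_ball, Real.dist_eq, abs_lt]
                have := min_le_right δ₀ ε
                constructor <;> linarith
              · exact ht
            have hres := hball htb
            have : (0:ℝ) < g i0 t * g i0 t0 := hres
            rw [← hii0] at this
            exact this
  obtain ⟨δ, hδ, hmain⟩ := main n
  refine ⟨δ, hδ, ?_⟩
  intro t ht h1 h2 i j hin hij hjn hj hmin
  exact hmain t ht h1 h2 i j (by omega) hin hij hjn hj hmin

lemma signs_right {f : ℝ → ℝ} {a b : ℝ} {n : ℕ} (hab : a < b)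
    (hdiff : ∀ i < n, ∀ x ∈ Set.Icc a b,
      DifferentiableWithinAt ℝ (iteratedDerivWithin i f (Set.Icc a b)) (Set.Icc a b) x)
    (hsign : (∀ x ∈ Set.Icc a b, 0 < iteratedDerivWithin n f (Set.Icc a b) x) ∨
             (∀ x ∈ Set.Icc a b, iteratedDerivWithin n f (Set.Icc a b) x < 0))
    (t0 : ℝ) (ht0 : t0 ∈ Set.Icc a b) :
    ∃ δ > 0, ∀ t ∈ Set.Icc a b, t0 < t → t < t0 + δ →
      ∀ i j : ℕ, i ≤ n → i ≤ j → j ≤ n →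
      iteratedDerivWithin j f (Set.Icc a b) t0 ≠ 0 →
      (∀ k, i ≤ k → k < j → iteratedDerivWithin k f (Set.Icc a b) t0 = 0) →
      0 < iteratedDerivWithin i f (Set.Icc a b) t *
        iteratedDerivWithin j f (Set.Icc a b) t0 := by
  set s := Set.Icc a b with hs
  set g : ℕ → ℝ → ℝ := fun i => iteratedDerivWithin i f s with hg
  have main : ∀ d : ℕ, ∃ δ > 0, ∀ t ∈ s, t0 < t → t < t0 + δ →
      ∀ i j : ℕ, n - d ≤ i → i ≤ n → i ≤ j → j ≤ n → g j t0 ≠ 0 →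
      (∀ k, i ≤ k → k < j → g k t0 = 0) →
      0 < g i t * g j t0 := by
    intro d
    induction d with
    | zero =>
      refine ⟨1, one_pos, ?_⟩
      intro t ht h1 h2 i j hge hle hij hjn hj hmin
      have hi : i = n := by omega
      have hjeq : j = n := by omega
      subst hi; subst hjeq
      rcases hsign with hp | hn
      · exact mul_pos (hp t ht) (hp t0 ht0)
      · exact mul_pos_of_neg_of_neg (hn t ht) (hn t0 ht0)
    | succ d IH =>
      obtain ⟨δ₀, hδ₀, hIH⟩ := IH
      by_cases heq : n - (d+1) = n - d
      · refine ⟨δ₀, hδ₀, ?_⟩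
        intro t ht h1 h2 i j hge hle hij hjn hj hmin
        exact hIH t ht h1 h2 i j (by omega) hle hij hjn hj hmin
      · set i0 := n - (d+1) with hi0def
        have hi0lt : i0 < n - d := by omega
        have hi0n : i0 < n := by omega
        by_cases hz : g i0 t0 = 0
        · refine ⟨δ₀, hδ₀, ?_⟩
          intro t ht h1 h2 i j hge hle hij hjn hj hmin
          by_cases hi : n - d ≤ i
          · exact hIH t ht h1 h2 i j hi hle hij hjn hj hmin
          · have hii0 : i = i0 := by omega
            have hzi : g i t0 = 0 := by rw [hii0]; exact hz
            have hin' : i < n := by omega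
            have hjgt : i < j := by
              rcases lt_or_eq_of_le hij with h | h
              · exact h
              · exact absurd (h ▸ hzi) hj
            have hsub : Set.Icc t0 t ⊆ s := Set.Icc_subset_Icc ht0.1 ht.2
            have hder_sign : ∀ u, t0 < u → u < t → 0 < g (i+1) u * g j t0 := by
              intro u hu1 hu2
              have hu : u ∈ s := ⟨le_trans ht0.1 hu1.le, le_trans hu2.le ht.2⟩
              exact hIH u hu hu1 (by linarith) (i+1) j (by omega) (by omega)
                (by omega) hjn hj (fun k hk1 hk2 => hmin k (by omega) hk2)
            have hcont : ContinuousOn (g i) (Set.Icc t0 t) :=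
              fun x hx => ((hdiff i hin' x (hsub hx)).continuousWithinAt).mono hsub
            have hderiv : ∀ u ∈ Set.Ioo t0 t, deriv (g i) u = g (i+1) u := by
              intro u hu
              have husm : u ∈ s := hsub (Set.Ioo_subset_Icc_self hu)
              have hnb : s ∈ 𝓝 u :=
                Icc_mem_nhds (lt_of_le_of_lt ht0.1 hu.1) (lt_of_lt_of_le hu.2 ht.2)
              have : g (i+1) u = derivWithin (g i) s u :=
                congrFun iteratedDerivWithin_succ u
              rw [this, derivWithin_of_mem_nhds hnb]
            have htmem : t ∈ Set.Icc t0 t := ⟨h1.le, le_refl t⟩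
            have ht0mem : t0 ∈ Set.Icc t0 t := ⟨le_refl t0, h1.le⟩
            rcases hj.lt_or_gt with hneg | hpos
            · -- g j t0 < 0 : deriv of g i negative, antitone, g i t < 0
              have hanti : StrictAntiOn (g i) (Set.Icc t0 t) := by
                apply strictAntiOn_of_deriv_neg (convex_Icc t0 t) hcont
                intro u hu
                rw [interior_Icc] at hu
                rw [hderiv u hu]
                nlinarith [hder_sign u hu.1 hu.2]
              have := hanti ht0mem htmem h1
              rw [hzi] at this
              exact mul_pos_of_neg_of_neg this hneg
            · have hmono : StrictMonoOn (g i) (Set.Icc t0 t) := by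
                apply strictMonoOn_of_deriv_pos (convex_Icc t0 t) hcont
                intro u hu
                rw [interior_Icc] at hu
                rw [hderiv u hu]
                nlinarith [hder_sign u hu.1 hu.2]
              have := hmono ht0mem htmem h1
              rw [hzi] at this
              exact mul_pos this hpos
        · have hcw : ContinuousWithinAt (g i0) s t0 :=
            (hdiff i0 hi0n t0 ht0).continuousWithinAt
          have hprod : ContinuousWithinAt (fun x => g i0 x * g i0 t0) s t0 :=
            hcw.mul continuousWithinAt_const
          have hmem : {x : ℝ | 0 < g i0 x * g i0 t0} ∈ 𝓝[s] t0 := by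
            have : Set.Ioi (0:ℝ) ∈ 𝓝 (g i0 t0 * g i0 t0) :=
              Ioi_mem_nhds (mul_self_pos.mpr hz)
            exact hprod.preimage_mem_nhdsWithin this
          rw [Metric.mem_nhdsWithin_iff] at hmem
          obtain ⟨ε, hε, hball⟩ := hmem
          refine ⟨min δ₀ ε, lt_min hδ₀ hε, ?_⟩
          intro t ht h1 h2 i j hge hle hij hjn hj hmin
          by_cases hi : n - d ≤ i
          · exact hIH t ht h1 (by have := min_le_left δ₀ ε; linarith) i j hi hle hij hjn hj hmin
          · have hii0 : i = i0 := by omega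
            have hzi : g i t0 ≠ 0 := by rw [hii0]; exact hz
            have hjeq : j = i := by
              by_contra hne
              exact hzi (hmin i le_rfl (by omega))
            subst hjeq
            have htb : t ∈ Metric.ball t0 ε ∩ s := by
              constructor
              · rw [Metric.mem_ball, Real.dist_eq, abs_lt]
                have := min_le_right δ₀ ε
                constructor <;> linarith
              · exact ht
            have hres := hball htb
            have : (0:ℝ) < g i0 t * g i0 t0 := hres
            rw [← hii0] at this
            exact this
  obtain ⟨δ, hδ, hmain⟩ := main n
  refine ⟨δ, hδ, ?_⟩
  intro t ht h1 h2 i j hin hij hjn hj hmin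
  exact hmain t ht h1 h2 i j (by omega) hin hij hjn hj hmin

lemma exists_minimal_j {f : ℝ → ℝ} {s : Set ℝ} {n : ℕ} {t0 : ℝ}
    (hne : iteratedDerivWithin n f s t0 ≠ 0) (i : ℕ) (hi : i ≤ n) :
    ∃ j, i ≤ j ∧ j ≤ n ∧ iteratedDerivWithin j f s t0 ≠ 0 ∧
      (∀ k, i ≤ k → k < j → iteratedDerivWithin k f s t0 = 0) := by
  classical
  have hex : ∃ k, i ≤ k ∧ k ≤ n ∧ iteratedDerivWithin k f s t0 ≠ 0 := ⟨n, hi, le_rfl, hne⟩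
  refine ⟨Nat.find hex, (Nat.find_spec hex).1, (Nat.find_spec hex).2.1,
    (Nat.find_spec hex).2.2, ?_⟩
  intro k hk1 hk2
  by_contra hk
  exact Nat.find_min hex hk2 ⟨hk1, by have := (Nat.find_spec hex).2.1; omega, hk⟩

lemma localW_left {f : ℝ → ℝ} {a b : ℝ} {n : ℕ} (hab : a < b)
    (hdiff : ∀ i < n, ∀ x ∈ Set.Icc a b,
      DifferentiableWithinAt ℝ (iteratedDerivWithin i f (Set.Icc a b)) (Set.Icc a b) x)
    (hne : ∀ x ∈ Set.Icc a b, iteratedDerivWithin n f (Set.Icc a b) x ≠ 0)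
    (hsign : (∀ x ∈ Set.Icc a b, 0 < iteratedDerivWithin n f (Set.Icc a b) x) ∨
             (∀ x ∈ Set.Icc a b, iteratedDerivWithin n f (Set.Icc a b) x < 0))
    (t0 : ℝ) (ht0 : t0 ∈ Set.Icc a b) (μ : ℕ)
    (hμ0 : ∀ i < μ, iteratedDerivWithin i f (Set.Icc a b) t0 = 0) :
    ∃ δ > 0, ∀ t ∈ Set.Icc a b, t0 - δ < t → t < t0 →
      vF n f (Set.Icc a b) t0 + μ ≤ vF n f (Set.Icc a b) t := by
  obtain ⟨δ, hδ, hsig⟩ := signs_left hab hdiff hsign t0 ht0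
  refine ⟨δ, hδ, ?_⟩
  intro t ht h1 h2
  have key := left_aux n (fun i : Fin (n+1) => iteratedDerivWithin (i:ℕ) f (Set.Icc a b) t0)
    (fun i : Fin (n+1) => iteratedDerivWithin (i:ℕ) f (Set.Icc a b) t) μ
    (by simp only [Fin.val_last]; exact hne t0 ht0)
    ?_ ?_ (fun i hi => hμ0 i hi)
  · exact key
  · intro i hi
    have := hsig t ht h1 h2 (i:ℕ) (i:ℕ) i.is_le le_rfl i.is_le hi (fun k hk1 hk2 => by omega)
    rw [Nat.sub_self, pow_zero, one_mul] at this
    exact this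
  · intro i hi
    simp only [Fin.coe_castSucc] at hi
    have hin : (i : ℕ) ≤ n := le_of_lt i.isLt
    obtain ⟨j, hj1, hj2, hj3, hj4⟩ := exists_minimal_j (hne t0 ht0) (i : ℕ) hin
    have hjgt : (i : ℕ) < j := by
      rcases lt_or_eq_of_le hj1 with h | h
      · exact h
      · exact absurd (h ▸ hi) hj3
    have A := hsig t ht h1 h2 (i:ℕ) j hin hj1 hj2 hj3 hj4
    have B := hsig t ht h1 h2 ((i:ℕ)+1) j (by omega) (by omega) hj2 hj3
      (fun k hk1 hk2 => hj4 k (by omega) hk2)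
    simp only [Fin.coe_castSucc, Fin.val_succ]
    have hpow : ((-1:ℝ))^(j-(i:ℕ)) = -((-1:ℝ))^(j-((i:ℕ)+1)) := by
      have hji : j - (i:ℕ) = (j - ((i:ℕ)+1)) + 1 := by omega
      rw [hji, pow_succ]; ring
    set gj := iteratedDerivWithin j f (Set.Icc a b) t0 with hgj
    set y' : ℝ := (-1:ℝ)^(j-((i:ℕ)+1)) * gj with hy'
    have hy'ne : y' ≠ 0 := mul_ne_zero (by positivity) hj3
    have hxy : ((-1:ℝ)^(j-(i:ℕ)) * gj) * y' < 0 := by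
      rw [hpow, hy']
      have : (0:ℝ) < ((-1:ℝ)^(j-((i:ℕ)+1)) * gj) * ((-1:ℝ)^(j-((i:ℕ)+1)) * gj) :=
        mul_self_pos.mpr hy'ne
      nlinarith [this]
    exact sign_neg_trans A B hxy

lemma localW_right {f : ℝ → ℝ} {a b : ℝ} {n : ℕ} (hab : a < b)
    (hdiff : ∀ i < n, ∀ x ∈ Set.Icc a b,
      DifferentiableWithinAt ℝ (iteratedDerivWithin i f (Set.Icc a b)) (Set.Icc a b) x)
    (hne : ∀ x ∈ Set.Icc a b, iteratedDerivWithin n f (Set.Icc a b) x ≠ 0)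
    (hsign : (∀ x ∈ Set.Icc a b, 0 < iteratedDerivWithin n f (Set.Icc a b) x) ∨
             (∀ x ∈ Set.Icc a b, iteratedDerivWithin n f (Set.Icc a b) x < 0))
    (t0 : ℝ) (ht0 : t0 ∈ Set.Icc a b) :
    ∃ δ > 0, ∀ t ∈ Set.Icc a b, t0 < t → t < t0 + δ →
      vF n f (Set.Icc a b) t ≤ vF n f (Set.Icc a b) t0 := by
  obtain ⟨δ, hδ, hsig⟩ := signs_right hab hdiff hsign t0 ht0
  refine ⟨δ, hδ, ?_⟩
  intro t ht h1 h2
  have key := right_aux n (fun i : Fin (n+1) => iteratedDerivWithin (i:ℕ) f (Set.Icc a b) t0)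
    (fun i : Fin (n+1) => iteratedDerivWithin (i:ℕ) f (Set.Icc a b) t)
    (by simp only [Fin.val_last]; exact hne t0 ht0)
    ?_ ?_
  · exact key.1
  · intro i hi
    have := hsig t ht h1 h2 (i:ℕ) (i:ℕ) i.is_le le_rfl i.is_le hi (fun k hk1 hk2 => by omega)
    exact this
  · intro i hi
    simp only [Fin.coe_castSucc] at hi
    have hin : (i : ℕ) ≤ n := le_of_lt i.isLt
    obtain ⟨j, hj1, hj2, hj3, hj4⟩ := exists_minimal_j (hne t0 ht0) (i : ℕ) hin
    have hjgt : (i : ℕ) < j := by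
      rcases lt_or_eq_of_le hj1 with h | h
      · exact h
      · exact absurd (h ▸ hi) hj3
    have A := hsig t ht h1 h2 (i:ℕ) j hin hj1 hj2 hj3 hj4
    have B := hsig t ht h1 h2 ((i:ℕ)+1) j (by omega) (by omega) hj2 hj3
      (fun k hk1 hk2 => hj4 k (by omega) hk2)
    simp only [Fin.coe_castSucc, Fin.val_succ]
    exact sign_pos_trans A B (mul_self_pos.mpr hj3)

lemma global_mono {a b : ℝ} (hab : a ≤ b) (V : ℝ → ℤ)
    (hL : ∀ t0 ∈ Set.Icc a b, ∃ δ > 0, ∀ t ∈ Set.Icc a b, t0 - δ < t → t < t0 → V t0 ≤ V t)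
    (hR : ∀ t0 ∈ Set.Icc a b, ∃ δ > 0, ∀ t ∈ Set.Icc a b, t0 < t → t < t0 + δ → V t ≤ V t0) :
    V b ≤ V a := by
  set S : Set ℝ := {t | t ∈ Set.Icc a b ∧ V t ≤ V a} with hS
  have haS : a ∈ S := ⟨⟨le_refl a, hab⟩, le_refl _⟩
  have hbdd : BddAbove S := ⟨b, fun t ht => ht.1.2⟩
  have hne : S.Nonempty := ⟨a, haS⟩
  set u := sSup S with hu
  have hua : a ≤ u := le_csSup hbdd haS
  have hub : u ≤ b := csSup_le hne (fun t ht => ht.1.2)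
  have huI : u ∈ Set.Icc a b := ⟨hua, hub⟩
  have hVu : V u ≤ V a := by
    obtain ⟨δ, hδ, hLu⟩ := hL u huI
    obtain ⟨t, htS, htl⟩ := exists_lt_of_lt_csSup hne (by linarith : u - δ < u)
    have htu : t ≤ u := le_csSup hbdd htS
    rcases eq_or_lt_of_le htu with h | h
    · rw [← h]; exact htS.2
    · exact le_trans (hLu t htS.1 htl h) htS.2
  by_cases hub' : u = b
  · rw [← hub']; exact hVu
  · exfalso
    have hult : u < b := lt_of_le_of_ne hub hub'
    obtain ⟨δ, hδ, hRu⟩ := hR u huI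
    set t := min b (u + δ/2) with htdef
    have htgt : u < t := lt_min hult (by linarith)
    have htle : t ≤ b := min_le_left _ _
    have htI : t ∈ Set.Icc a b := ⟨le_trans hua htgt.le, htle⟩
    have htlt : t < u + δ := lt_of_le_of_lt (min_le_right _ _) (by linarith)
    have : t ∈ S := ⟨htI, le_trans (hRu t htI htgt htlt) hVu⟩
    exact absurd (le_csSup hbdd this) (not_le.mpr htgt)


/-- Generalized Budan's rule: if `f` is `n` times differentiable on `[a, b]`
(one-sidedly at the endpoints), its `n`-th derivative never vanishes and has constant
sign on `[a, b]`, and `f(a) ≠ 0`, then the number of zeros of `f` in `[a, b]`, counted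
with multiplicity, is at most `v(f, a, n) - v(f, b, n)`.  The zeros in `[a, b]` are
given as a finite set `Z` together with their multiplicities `m`. -/
theorem generalized_budan (f : ℝ → ℝ) (a b : ℝ) (hab : a ≤ b) (n : ℕ)
    (hdiff : ∀ i < n, ∀ x ∈ Set.Icc a b,
      DifferentiableWithinAt ℝ (iteratedDerivWithin i f (Set.Icc a b)) (Set.Icc a b) x)
    (hne : ∀ x ∈ Set.Icc a b, iteratedDerivWithin n f (Set.Icc a b) x ≠ 0)
    (hsign : (∀ x ∈ Set.Icc a b, 0 < iteratedDerivWithin n f (Set.Icc a b) x) ∨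
             (∀ x ∈ Set.Icc a b, iteratedDerivWithin n f (Set.Icc a b) x < 0))
    (hfa : f a ≠ 0)
    (Z : Finset ℝ) (hZ : ∀ α ∈ Z, α ∈ Set.Icc a b ∧ f α = 0)
    (m : ℝ → ℕ)
    (hm : ∀ α ∈ Z, (∀ i < m α, iteratedDerivWithin i f (Set.Icc a b) α = 0) ∧
      iteratedDerivWithin (m α) f (Set.Icc a b) α ≠ 0) :
    ((∑ α ∈ Z, m α : ℕ) : ℤ) ≤
      (vF n f (Set.Icc a b) a : ℤ) - vF n f (Set.Icc a b) b := by
  rcases eq_or_lt_of_le hab with hab' | hab'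
  · -- degenerate a = b
    subst hab'
    have hZe : Z = ∅ := by
      rw [Finset.eq_empty_iff_forall_notMem]
      intro α hα
      obtain ⟨hαI, hαf⟩ := hZ α hα
      have : α = a := le_antisymm hαI.2 hαI.1
      rw [this] at hαf
      exact hfa hαf
    rw [hZe]
    simp
  · -- main case a < b
    have hZmem : ∀ α ∈ Z, a < α ∧ α ≤ b := by
      intro α hα
      obtain ⟨hαI, hαf⟩ := hZ α hα
      refine ⟨lt_of_le_of_ne hαI.1 ?_, hαI.2⟩
      intro h
      rw [← h] at hαf
      exact hfa hαf
    set V : ℝ → ℤ := fun t => (vF n f (Set.Icc a b) t : ℤ) +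
      ∑ α ∈ Z.filter (fun α => α ≤ t), (m α : ℤ) with hV
    have hL : ∀ t0 ∈ Set.Icc a b, ∃ δ > 0, ∀ t ∈ Set.Icc a b,
        t0 - δ < t → t < t0 → V t0 ≤ V t := by
      intro t0 ht0
      classical
      set μ : ℕ := if t0 ∈ Z then m t0 else 0 with hμdef
      have hμ0 : ∀ i < μ, iteratedDerivWithin i f (Set.Icc a b) t0 = 0 := by
        intro i hi
        by_cases hz : t0 ∈ Z
        · exact (hm t0 hz).1 i (by rw [hμdef, if_pos hz] at hi; exact hi)
        · rw [hμdef, if_neg hz] at hi; omega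
      obtain ⟨δ₁, hδ₁, hW⟩ := localW_left hab' hdiff hne hsign t0 ht0 μ hμ0
      -- gap to nearest zero below t0
      obtain ⟨δ₂, hδ₂, hgap⟩ : ∃ δ₂ > 0, ∀ α ∈ Z, t0 - δ₂ < α → ¬ (α < t0) := by
        by_cases hZ'ne : (Z.filter (fun α => α < t0)).Nonempty
        · set M := (Z.filter (fun α => α < t0)).max' hZ'ne with hM
          have hMlt : M < t0 := (Finset.mem_filter.mp ((Z.filter _).max'_mem hZ'ne)).2
          refine ⟨t0 - M, by linarith, ?_⟩
          intro α hα h1 h2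
          have : α ∈ Z.filter (fun α => α < t0) := Finset.mem_filter.mpr ⟨hα, h2⟩
          have := Finset.le_max' _ α this
          rw [← hM] at this
          linarith
        · refine ⟨1, one_pos, ?_⟩
          intro α hα h1 h2
          exact hZ'ne ⟨α, Finset.mem_filter.mpr ⟨hα, h2⟩⟩
      refine ⟨min δ₁ δ₂, lt_min hδ₁ hδ₂, ?_⟩
      intro t ht h1 h2
      have h1' : t0 - δ₁ < t := by have := min_le_left δ₁ δ₂; linarith
      have h1'' : t0 - δ₂ < t := by have := min_le_right δ₁ δ₂; linarith
      have hsum : ∑ α ∈ Z.filter (fun α => α ≤ t0), (m α : ℤ)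
          = ∑ α ∈ Z.filter (fun α => α ≤ t), (m α : ℤ) + μ := by
        by_cases hz : t0 ∈ Z
        · have hfl : Z.filter (fun α => α ≤ t0) = insert t0 (Z.filter (fun α => α ≤ t)) := by
            ext α
            simp only [Finset.mem_filter, Finset.mem_insert]
            constructor
            · rintro ⟨hαZ, hle⟩
              rcases eq_or_lt_of_le hle with h | h
              · exact Or.inl h
              · refine Or.inr ⟨hαZ, ?_⟩
                by_contra hgt
                exact hgap α hαZ (by push_neg at hgt; linarith) h
            · rintro (rfl | ⟨hαZ, hle⟩)
              · exact ⟨hz, le_refl _⟩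
              · exact ⟨hαZ, by linarith⟩
          rw [hfl, Finset.sum_insert (by
            simp only [Finset.mem_filter]
            rintro ⟨-, hle⟩
            linarith)]
          rw [hμdef, if_pos hz]
          ring
        · have hfl : Z.filter (fun α => α ≤ t0) = Z.filter (fun α => α ≤ t) := by
            ext α
            simp only [Finset.mem_filter]
            constructor
            · rintro ⟨hαZ, hle⟩
              refine ⟨hαZ, ?_⟩
              have hlt : α < t0 := lt_of_le_of_ne hle (by rintro rfl; exact hz hαZ)
              by_contra hgt
              exact hgap α hαZ (by push_neg at hgt; linarith) hlt
            · rintro ⟨hαZ, hle⟩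
              exact ⟨hαZ, by linarith⟩
          rw [hfl, hμdef, if_neg hz]
          ring
      have hWt := hW t ht h1' h2
      show (vF n f (Set.Icc a b) t0 : ℤ) + ∑ α ∈ Z.filter (fun α => α ≤ t0), (m α : ℤ)
        ≤ (vF n f (Set.Icc a b) t : ℤ) + ∑ α ∈ Z.filter (fun α => α ≤ t), (m α : ℤ)
      rw [hsum]
      have : (vF n f (Set.Icc a b) t0 : ℤ) + μ ≤ (vF n f (Set.Icc a b) t : ℤ) := by
        exact_mod_cast hWt
      linarith
    have hR : ∀ t0 ∈ Set.Icc a b, ∃ δ > 0, ∀ t ∈ Set.Icc a b,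
        t0 < t → t < t0 + δ → V t ≤ V t0 := by
      intro t0 ht0
      classical
      obtain ⟨δ₁, hδ₁, hW⟩ := localW_right hab' hdiff hne hsign t0 ht0
      obtain ⟨δ₂, hδ₂, hgap⟩ : ∃ δ₂ > 0, ∀ α ∈ Z, α < t0 + δ₂ → ¬ (t0 < α) := by
        by_cases hZ'ne : (Z.filter (fun α => t0 < α)).Nonempty
        · set M := (Z.filter (fun α => t0 < α)).min' hZ'ne with hM
          have hMlt : t0 < M := (Finset.mem_filter.mp ((Z.filter _).min'_mem hZ'ne)).2
          refine ⟨M - t0, by linarith, ?_⟩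
          intro α hα h1 h2
          have : α ∈ Z.filter (fun α => t0 < α) := Finset.mem_filter.mpr ⟨hα, h2⟩
          have := Finset.min'_le _ α this
          rw [← hM] at this
          linarith
        · refine ⟨1, one_pos, ?_⟩
          intro α hα h1 h2
          exact hZ'ne ⟨α, Finset.mem_filter.mpr ⟨hα, h2⟩⟩
      refine ⟨min δ₁ δ₂, lt_min hδ₁ hδ₂, ?_⟩
      intro t ht h1 h2
      have h2' : t < t0 + δ₁ := by have := min_le_left δ₁ δ₂; linarith
      have h2'' : t < t0 + δ₂ := by have := min_le_right δ₁ δ₂; linarith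
      have hfl : Z.filter (fun α => α ≤ t) = Z.filter (fun α => α ≤ t0) := by
        ext α
        simp only [Finset.mem_filter]
        constructor
        · rintro ⟨hαZ, hle⟩
          refine ⟨hαZ, ?_⟩
          by_contra hgt
          push_neg at hgt
          exact hgap α hαZ (by linarith) hgt
        · rintro ⟨hαZ, hle⟩
          exact ⟨hαZ, by linarith⟩
      have hWt := hW t ht h1 h2'
      show (vF n f (Set.Icc a b) t : ℤ) + ∑ α ∈ Z.filter (fun α => α ≤ t), (m α : ℤ)
        ≤ (vF n f (Set.Icc a b) t0 : ℤ) + ∑ α ∈ Z.filter (fun α => α ≤ t0), (m α : ℤ)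
      rw [hfl]
      have : (vF n f (Set.Icc a b) t : ℤ) ≤ (vF n f (Set.Icc a b) t0 : ℤ) := by
        exact_mod_cast hWt
      linarith
    have hglob := global_mono hab V hL hR
    have hVa : V a = (vF n f (Set.Icc a b) a : ℤ) := by
      show (vF n f (Set.Icc a b) a : ℤ) + ∑ α ∈ Z.filter (fun α => α ≤ a), (m α : ℤ) = _
      have : Z.filter (fun α => α ≤ a) = ∅ := by
        rw [Finset.filter_eq_empty_iff]
        intro α hα
        have := (hZmem α hα).1
        push_neg
        linarith
      rw [this, Finset.sum_empty, add_zero]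
    have hVb : V b = (vF n f (Set.Icc a b) b : ℤ) + ∑ α ∈ Z, (m α : ℤ) := by
      show (vF n f (Set.Icc a b) b : ℤ) + ∑ α ∈ Z.filter (fun α => α ≤ b), (m α : ℤ) = _
      have : Z.filter (fun α => α ≤ b) = Z := by
        rw [Finset.filter_eq_self]
        intro α hα
        exact (hZmem α hα).2
      rw [this]
    rw [hVa, hVb] at hglob
    have hcast : ((∑ α ∈ Z, m α : ℕ) : ℤ) = ∑ α ∈ Z, (m α : ℤ) := by push_cast; rfl
    rw [hcast]
    linarith
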